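/- For the 5-dimensional Lotka-Volterra system of type [2,0,0] with antisymmetric matrix A having upper entries A_{12}=a₁, A_{13}=A_{14}=A_{23}=A_{24}=(b₁c₂−b₂c₁)/a₃, A_{34}=a₂, A_{15}=A_{25}=b₁, A_{35}=A_{45}=b₂, the function Q = (x₁+x₂)^{b₂}(x₃+x₄)^{−b₁} x₅^{(c₂b₁−c₁b₂)/a₃} is a constant of motion and C = (x₁/x₂)^{b₁a₂}(x₃/x₄)^{a₁b₂} x₅^{a₁a₂} is a Casimir of the bracket {x_i,x_j}=A_{ij}x_ix_j (assuming a₃ ≠ 0). -/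

import Mathlib

open Real Finset

/-- i-th component of the gradient of `F` at `x`. -/
noncomputable def grad {n : ℕ} (F : (Fin n → ℝ) → ℝ) (x : Fin n → ℝ) (i : Fin n) : ℝ :=
  fderiv ℝ F x (Pi.single i 1)

/-- Lie derivative (directional derivative) of `F` along the vector field `f` at `x`. -/
noncomputable def lieDeriv {n : ℕ} (F : (Fin n → ℝ) → ℝ) (f : (Fin n → ℝ) → Fin n → ℝ)
    (x : Fin n → ℝ) : ℝ := ∑ i, grad F x i * f x i

/-- The Poisson bracket {F,G}(x) = Σ_{i,j} A_{ij} x_i x_j ∂_iF ∂_jG. -/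
noncomputable def pbracket {n : ℕ} (A : Matrix (Fin n) (Fin n) ℝ)
    (F G : (Fin n → ℝ) → ℝ) (x : Fin n → ℝ) : ℝ :=
  ∑ i, ∑ j, A i j * x i * x j * grad F x i * grad G x j

/-- The (possibly inhomogeneous) Lotka-Volterra vector field
`f_i(x) = x_i (r_i + Σ_j A_{ij} x_j)`. -/
def lvField {n : ℕ} (A : Matrix (Fin n) (Fin n) ℝ) (r : Fin n → ℝ)
    (x : Fin n → ℝ) (i : Fin n) : ℝ := x i * (r i + ∑ j, A i j * x j)

set_option maxHeartbeats 1000000 in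
/-- the 5-dim type [2,0,0] LV system: Q is a constant of motion and
C is a Casimir of the bracket {x_i,x_j} = A_{ij} x_i x_j (a₃ ≠ 0). -/
theorem stmt15 (a₁ a₂ a₃ b₁ b₂ c₁ c₂ : ℝ) (ha₃ : a₃ ≠ 0) :
    let d : ℝ := (b₁ * c₂ - b₂ * c₁) / a₃
    let A : Matrix (Fin 5) (Fin 5) ℝ :=
      !![0, a₁, d, d, b₁;
         -a₁, 0, d, d, b₁;
         -d, -d, 0, a₂, b₂;
         -d, -d, -a₂, 0, b₂;
         -b₁, -b₁, -b₂, -b₂, 0]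
    let Q : (Fin 5 → ℝ) → ℝ :=
      fun x => (x 0 + x 1) ^ b₂ * (x 2 + x 3) ^ (-b₁) * x 4 ^ ((c₂ * b₁ - c₁ * b₂) / a₃)
    let C : (Fin 5 → ℝ) → ℝ :=
      fun x => (x 0 / x 1) ^ (b₁ * a₂) * (x 2 / x 3) ^ (a₁ * b₂) * x 4 ^ (a₁ * a₂)
    ∀ x : Fin 5 → ℝ, (∀ i, 0 < x i) →
      lieDeriv Q (lvField A 0) x = 0 ∧
      ∀ i : Fin 5, pbracket A (fun y => y i) C x = 0 := by
  intro d A Q C x hx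
  have h0 := hx 0; have h1 := hx 1; have h2 := hx 2; have h3 := hx 3; have h4 := hx 4
  have h01 : (0:ℝ) < x 0 + x 1 := by linarith
  have h23 : (0:ℝ) < x 2 + x 3 := by linarith
  have P : ∀ i : Fin 5, HasFDerivAt (fun y : Fin 5 → ℝ => y i)
      (ContinuousLinearMap.proj i : (Fin 5 → ℝ) →L[ℝ] ℝ) x := fun i =>
    (ContinuousLinearMap.proj i : (Fin 5 → ℝ) →L[ℝ] ℝ).hasFDerivAt
  constructor
  · -- Q is a constant of motion
    have hf1 : HasFDerivAt (fun y : Fin 5 → ℝ => (y 0 + y 1) ^ b₂)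
        ((b₂ * (x 0 + x 1) ^ (b₂ - 1)) •
          ((ContinuousLinearMap.proj 0 : (Fin 5 → ℝ) →L[ℝ] ℝ) + ContinuousLinearMap.proj 1)) x :=
      ((P 0).add (P 1)).rpow_const (Or.inl h01.ne')
    have hf2 : HasFDerivAt (fun y : Fin 5 → ℝ => (y 2 + y 3) ^ (-b₁))
        ((-b₁ * (x 2 + x 3) ^ (-b₁ - 1)) •
          ((ContinuousLinearMap.proj 2 : (Fin 5 → ℝ) →L[ℝ] ℝ) + ContinuousLinearMap.proj 3)) x :=
      ((P 2).add (P 3)).rpow_const (Or.inl h23.ne')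
    have hf3 : HasFDerivAt (fun y : Fin 5 → ℝ => y 4 ^ ((c₂ * b₁ - c₁ * b₂) / a₃))
        (((c₂ * b₁ - c₁ * b₂) / a₃ * x 4 ^ ((c₂ * b₁ - c₁ * b₂) / a₃ - 1)) •
          (ContinuousLinearMap.proj 4 : (Fin 5 → ℝ) →L[ℝ] ℝ)) x :=
      (P 4).rpow_const (Or.inl h4.ne')
    have hQ : HasFDerivAt Q _ x := (hf1.mul hf2).mul hf3
    have hfdQ := hQ.fderiv
    simp only [lieDeriv, lvField, grad, hfdQ, Fin.sum_univ_five, A,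
      ContinuousLinearMap.add_apply, ContinuousLinearMap.coe_smul', Pi.smul_apply,
      ContinuousLinearMap.proj_apply, smul_eq_mul, Pi.zero_apply, zero_add,
      Matrix.cons_val', Matrix.cons_val_zero, Matrix.cons_val_one, Matrix.head_cons,
      Matrix.empty_val', Matrix.cons_val_fin_one, Matrix.head_fin_const,
      Matrix.cons_val_two, Matrix.cons_val_three, Matrix.cons_val_four,
      Matrix.tail_cons, Matrix.of_apply, Pi.single_apply]
    norm_num
    simp (config := { decide := true }) only [reduceIte, Fin.isValue]
    unfold d
    rw [Real.rpow_sub_one h01.ne', Real.rpow_sub_one h23.ne', Real.rpow_sub_one h4.ne']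
    rw [show (b₁ * c₂ - b₂ * c₁) / a₃ = (c₂ * b₁ - c₁ * b₂) / a₃ by ring]
    generalize (c₂ * b₁ - c₁ * b₂) / a₃ = E
    generalize (x 0 + x 1) ^ b₂ = P1
    generalize (x 2 + x 3) ^ (-b₁) = P2
    generalize x 4 ^ E = P3
    field_simp
    ring
  · -- C is a Casimir
    intro i
    have hgc : ∀ j k : Fin 5, grad (fun y : Fin 5 → ℝ => y j) x k
        = if j = k then 1 else 0 := by
      intro j k
      unfold grad
      rw [show fderiv ℝ (fun y : Fin 5 → ℝ => y j) x
          = (ContinuousLinearMap.proj j : (Fin 5 → ℝ) →L[ℝ] ℝ) from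
        (ContinuousLinearMap.proj j : (Fin 5 → ℝ) →L[ℝ] ℝ).fderiv]
      simp [Pi.single_apply, eq_comm]
    have hg0 : HasFDerivAt (fun y : Fin 5 → ℝ => y 0 ^ (b₁ * a₂))
        ((b₁ * a₂ * x 0 ^ (b₁ * a₂ - 1)) •
          (ContinuousLinearMap.proj 0 : (Fin 5 → ℝ) →L[ℝ] ℝ)) x :=
      (P 0).rpow_const (Or.inl h0.ne')
    have hg1 : HasFDerivAt (fun y : Fin 5 → ℝ => y 1 ^ (-(b₁ * a₂)))
        ((-(b₁ * a₂) * x 1 ^ (-(b₁ * a₂) - 1)) •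
          (ContinuousLinearMap.proj 1 : (Fin 5 → ℝ) →L[ℝ] ℝ)) x :=
      (P 1).rpow_const (Or.inl h1.ne')
    have hg2 : HasFDerivAt (fun y : Fin 5 → ℝ => y 2 ^ (a₁ * b₂))
        ((a₁ * b₂ * x 2 ^ (a₁ * b₂ - 1)) •
          (ContinuousLinearMap.proj 2 : (Fin 5 → ℝ) →L[ℝ] ℝ)) x :=
      (P 2).rpow_const (Or.inl h2.ne')
    have hg3 : HasFDerivAt (fun y : Fin 5 → ℝ => y 3 ^ (-(a₁ * b₂)))
        ((-(a₁ * b₂) * x 3 ^ (-(a₁ * b₂) - 1)) •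
          (ContinuousLinearMap.proj 3 : (Fin 5 → ℝ) →L[ℝ] ℝ)) x :=
      (P 3).rpow_const (Or.inl h3.ne')
    have hg4 : HasFDerivAt (fun y : Fin 5 → ℝ => y 4 ^ (a₁ * a₂))
        ((a₁ * a₂ * x 4 ^ (a₁ * a₂ - 1)) •
          (ContinuousLinearMap.proj 4 : (Fin 5 → ℝ) →L[ℝ] ℝ)) x :=
      (P 4).rpow_const (Or.inl h4.ne')
    have hD : HasFDerivAt (fun y : Fin 5 → ℝ =>
        y 0 ^ (b₁ * a₂) * y 1 ^ (-(b₁ * a₂)) * y 2 ^ (a₁ * b₂) * y 3 ^ (-(a₁ * b₂))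
          * y 4 ^ (a₁ * a₂)) _ x := (((hg0.mul hg1).mul hg2).mul hg3).mul hg4
    have hmem : {y : Fin 5 → ℝ | 0 < y 0 ∧ 0 < y 1 ∧ 0 < y 2 ∧ 0 < y 3} ∈ nhds x := by
      refine IsOpen.mem_nhds ?_ ⟨h0, h1, h2, h3⟩
      exact (isOpen_lt continuous_const (continuous_apply 0)).and
        ((isOpen_lt continuous_const (continuous_apply 1)).and
          ((isOpen_lt continuous_const (continuous_apply 2)).and
            (isOpen_lt continuous_const (continuous_apply 3))))
    have hCD : C =ᶠ[nhds x] (fun y : Fin 5 → ℝ =>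
        y 0 ^ (b₁ * a₂) * y 1 ^ (-(b₁ * a₂)) * y 2 ^ (a₁ * b₂) * y 3 ^ (-(a₁ * b₂))
          * y 4 ^ (a₁ * a₂)) := by
      refine Filter.eventuallyEq_of_mem hmem fun y hy => ?_
      obtain ⟨hy0, hy1, hy2, hy3⟩ := hy
      show (y 0 / y 1) ^ (b₁ * a₂) * (y 2 / y 3) ^ (a₁ * b₂) * y 4 ^ (a₁ * a₂) = _
      rw [Real.div_rpow hy0.le hy1.le, Real.div_rpow hy2.le hy3.le,
        Real.rpow_neg hy1.le, Real.rpow_neg hy3.le]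
      ring
    have hC : HasFDerivAt C _ x := hD.congr_of_eventuallyEq hCD
    have hfdC := hC.fderiv
    fin_cases i <;>
    · simp only [pbracket, Fin.sum_univ_five, hgc]
      simp only [grad, hfdC, A,
        ContinuousLinearMap.add_apply, ContinuousLinearMap.coe_smul', Pi.smul_apply,
        ContinuousLinearMap.proj_apply, smul_eq_mul,
        Matrix.cons_val', Matrix.cons_val_zero, Matrix.cons_val_one, Matrix.head_cons,
        Matrix.empty_val', Matrix.cons_val_fin_one, Matrix.head_fin_const,
        Matrix.cons_val_two, Matrix.cons_val_three, Matrix.cons_val_four,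
        Matrix.tail_cons, Matrix.of_apply, Pi.single_apply]
      try norm_num
      simp (config := { decide := true }) only [reduceIte, Fin.isValue]
      simp only [Real.rpow_sub_one h0.ne', Real.rpow_sub_one h1.ne',
        Real.rpow_sub_one h2.ne', Real.rpow_sub_one h3.ne', Real.rpow_sub_one h4.ne']
      try unfold d
      generalize (b₁ * c₂ - b₂ * c₁) / a₃ = D
      generalize x 0 ^ (b₁ * a₂) = X0
      generalize x 1 ^ (-(b₁ * a₂)) = X1
      generalize x 2 ^ (a₁ * b₂) = X2
      generalize x 3 ^ (-(a₁ * b₂)) = X3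
      generalize x 4 ^ (a₁ * a₂) = X4
      field_simp
      ring
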